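/- Let C : ℤ → U(2) satisfy the standing Assumption and let U = S∘C. Let ψ : ℤ → ℂ² be compactly supported and let J be a bounded interval with J ⊇ supp ψ ∪ chs(C−I₂). Let M_J = 1_J U 1_J, regarded as a linear operator on the (2|J|_ℤ)-dimensional space of maps ℤ → ℂ² supported in J. Set Λ₀ := max{|λ| : λ is a nonzero eigenvalue of M_J} (Λ₀ := 0 if there is none), and let m₀ be the maximal algebraic multiplicity among nonzero eigenvalues λ of M_J with |λ| = Λ₀ (m₀ := 1 if Λ₀ = 0). Then Λ₀ < 1 and there exist a constant M > 0 and n₀ ∈ ℕ such that for all n ≥ n₀, ‖1_J U^n ψ‖_ℋ ≤ M n^{m₀−1} Λ₀^n. -/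

import Mathlib

noncomputable section

open scoped ComplexConjugate

/-- A state: a map ℤ → ℂ², components `ψ x 0` (left, ψ^L) and `ψ x 1` (right, ψ^R). -/
abbrev QWState := ℤ → Fin 2 → ℂ

/-- The quantum walk operator U = S∘C acting pointwise:
`(Uψ)(x) = ((C(x+1)ψ(x+1))₁, (C(x−1)ψ(x−1))₂)`. -/
def qwalk (C : ℤ → Matrix (Fin 2) (Fin 2) ℂ) (ψ : QWState) : QWState :=
  fun x => ![(C (x + 1)).mulVec (ψ (x + 1)) 0, (C (x - 1)).mulVec (ψ (x - 1)) 1]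

/-- The standing Assumption on the coin. -/
structure CoinAssumption (C : ℤ → Matrix (Fin 2) (Fin 2) ℂ) : Prop where
  unitary : ∀ x, C x ∈ Matrix.unitaryGroup (Fin 2) ℂ
  d11 : ∀ x, C x 0 0 ≠ 0
  d22 : ∀ x, C x 1 1 ≠ 0
  fin : Set.Finite {x : ℤ | C x ≠ 1}

/-- Outgoing: ψ^L vanishes far right, ψ^R vanishes far left. -/
def Outgoing (ψ : QWState) : Prop :=
  ∃ r : ℤ, 0 < r ∧ ∀ x : ℤ, r < x → ψ x 0 = 0 ∧ ψ (-x) 1 = 0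

/-- Extension by zero of a map defined on J ∩ ℤ = [a,b] ∩ ℤ to all of ℤ. -/
def embed (a b : ℤ) (f : ↥(Set.Icc a b) → Fin 2 → ℂ) : QWState :=
  fun x => if hx : x ∈ Set.Icc a b then f ⟨x, hx⟩ else 0

open Module

section AuxQW

lemma qw_nilp_exp {V : Type} [AddCommGroup V] [Module ℂ V] [FiniteDimensional ℂ V]
    (T : Module.End ℂ V) (μ : ℂ) (w : V) (hw : w ∈ T.maxGenEigenspace μ) :
    ((T - μ • 1) ^ (finrank ℂ ↥(T.maxGenEigenspace μ))) w = 0 := by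
  set N : Module.End ℂ V := T - μ • 1 with hN
  set W := T.maxGenEigenspace μ with hW
  set d := finrank ℂ ↥W with hd
  have hcomm : Commute T N := (Commute.refl T).sub_right ((Commute.one_right T).smul_right μ)
  have hMaps : ∀ x ∈ W, N x ∈ W := fun x hx =>
    Module.End.mapsTo_maxGenEigenspace_of_comm hcomm μ hx
  set R : Module.End ℂ ↥W := N.restrict hMaps with hR
  have hpow : ∀ k : ℕ, ∀ x : ↥W, ((R ^ k) x : V) = (N ^ k) (x : V) := by
    intro k x
    rw [Module.End.pow_restrict]
    simp [LinearMap.restrict_apply]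
  have hRV : R ^ (finrank ℂ V) = 0 := by
    ext x
    have hx : (x : V) ∈ T.genEigenspace μ (finrank ℂ V) := by
      rw [← Module.End.maxGenEigenspace_eq_genEigenspace_finrank]; exact x.2
    have hNx : ((N ^ (finrank ℂ V)) (x : V)) = 0 := by
      rw [Module.End.mem_genEigenspace] at hx
      obtain ⟨l, hl, hlx⟩ := hx
      have hl' : l ≤ finrank ℂ V := by exact_mod_cast hl
      have hsplit : N ^ (finrank ℂ V) = N ^ (finrank ℂ V - l) * N ^ l := by
        rw [← pow_add]; congr 1; omega
      rw [hsplit, Module.End.mul_apply, LinearMap.mem_ker.mp hlx, map_zero]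
    have h := hpow (finrank ℂ V) x
    rw [h, hNx]; rfl
  have hRd : R ^ d = 0 := by
    have h1 : LinearMap.ker (R ^ (d + finrank ℂ V)) = LinearMap.ker (R ^ d) := by
      have := Module.End.ker_pow_eq_ker_pow_finrank_of_le
        (K := ℂ) (V := ↥W) (f := R) (m := d + finrank ℂ V) (by omega)
      rw [this, Module.End.ker_pow_eq_ker_pow_finrank_of_le (le_refl (finrank ℂ ↥W))]
    have h2 : R ^ (d + finrank ℂ V) = 0 := by
      rw [pow_add, hRV, mul_zero]
    have h3 : LinearMap.ker (R ^ d) = ⊤ := by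
      rw [← h1, h2]; exact LinearMap.ker_zero
    exact LinearMap.ker_eq_top.mp h3
  have := hpow d ⟨w, hw⟩
  rw [hRd] at this
  simpa using this.symm


lemma qw_growth_bound {V : Type} [NormedAddCommGroup V] [NormedSpace ℂ V] [FiniteDimensional ℂ V]
    (T : Module.End ℂ V) (Λ₀ : ℝ) (m₀ : ℕ)
    (hΛ₀0 : 0 ≤ Λ₀)
    (hub : ∀ lam : ℂ, lam ≠ 0 → T.HasEigenvalue lam → ‖lam‖ ≤ Λ₀)
    (hm : ∀ lam : ℂ, lam ≠ 0 → T.HasEigenvalue lam → ‖lam‖ = Λ₀ →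
      finrank ℂ ↥(T.maxGenEigenspace lam) ≤ m₀)
    (v : V) :
    ∃ Mc : ℝ, 0 < Mc ∧ ∃ n₀ : ℕ, ∀ n, n₀ ≤ n →
      ‖(T ^ n) v‖ ≤ Mc * (n : ℝ) ^ (m₀ - 1) * Λ₀ ^ n := by
  set p : V → Prop := fun u => ∃ Mc : ℝ, 0 < Mc ∧ ∃ n₀ : ℕ, ∀ n, n₀ ≤ n →
      ‖(T ^ n) u‖ ≤ Mc * (n : ℝ) ^ (m₀ - 1) * Λ₀ ^ n with hp
  have hRHS0 : ∀ n : ℕ, (0:ℝ) ≤ (n : ℝ) ^ (m₀ - 1) * Λ₀ ^ n := fun n =>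
    mul_nonneg (pow_nonneg (Nat.cast_nonneg n) _) (pow_nonneg hΛ₀0 n)
  have hp0 : p 0 := by
    refine ⟨1, one_pos, 0, fun n _ => ?_⟩
    simp only [map_zero, norm_zero, one_mul]
    exact hRHS0 n
  have hpadd : ∀ x y, p x → p y → p (x + y) := by
    rintro x y ⟨Mx, hMx, nx, hx⟩ ⟨My, hMy, ny, hy⟩
    refine ⟨Mx + My, by linarith, max nx ny, fun n hn => ?_⟩
    have h1 := hx n (le_trans (le_max_left _ _) hn)
    have h2 := hy n (le_trans (le_max_right _ _) hn)
    calc ‖(T ^ n) (x + y)‖ ≤ ‖(T ^ n) x‖ + ‖(T ^ n) y‖ := by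
          rw [map_add]; exact norm_add_le _ _
      _ ≤ Mx * (n : ℝ) ^ (m₀ - 1) * Λ₀ ^ n + My * (n : ℝ) ^ (m₀ - 1) * Λ₀ ^ n := by linarith
      _ = (Mx + My) * (n : ℝ) ^ (m₀ - 1) * Λ₀ ^ n := by ring
  have hpmem : ∀ (μ : ℂ), ∀ w ∈ T.maxGenEigenspace μ, p w := by
    intro μ w hw
    by_cases hw0 : w = 0
    · rw [hw0]; exact hp0
    set N : Module.End ℂ V := T - μ • 1 with hN
    set d := finrank ℂ ↥(T.maxGenEigenspace μ) with hd
    have hNd : (N ^ d) w = 0 := qw_nilp_exp T μ w hw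
    have hNm : ∀ m, d ≤ m → (N ^ m) w = 0 := by
      intro m hm'
      have : N ^ m = N ^ (m - d) * N ^ d := by rw [← pow_add]; congr 1; omega
      rw [this, Module.End.mul_apply, hNd, map_zero]
    by_cases hμ0 : μ = 0
    · -- nilpotent case
      refine ⟨1, one_pos, d, fun n hn => ?_⟩
      have : (T ^ n) w = 0 := by
        have : T = N := by rw [hN, hμ0]; simp
        rw [this]; exact hNm n hn
      rw [this, norm_zero, one_mul]
      exact hRHS0 n
    · -- μ ≠ 0
      have hev : T.HasEigenvalue μ := by
        have hne : T.maxGenEigenspace μ ≠ ⊥ := by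
          intro hbot
          rw [hbot] at hw
          exact hw0 (Submodule.mem_bot ℂ |>.mp hw)
        have : T.HasGenEigenvalue μ (finrank ℂ V) := by
          unfold Module.End.HasGenEigenvalue Module.End.HasUnifEigenvalue
          rw [← Module.End.maxGenEigenspace_eq_genEigenspace_finrank]
          exact hne
        exact Module.End.hasEigenvalue_of_hasGenEigenvalue this
      have hμΛ : ‖μ‖ ≤ Λ₀ := hub μ hμ0 hev
      have hμpos : (0:ℝ) < ‖μ‖ := norm_pos_iff.mpr hμ0
      -- binomial expansion bound
      set A : ℝ := ∑ m ∈ Finset.range d, ‖(N ^ m) w‖ / ‖μ‖ ^ m with hA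
      have hA0 : 0 ≤ A :=
        Finset.sum_nonneg fun m _ => div_nonneg (norm_nonneg _) (pow_nonneg hμpos.le m)
      have key : ∀ n, d ≤ n → 1 ≤ n →
          ‖(T ^ n) w‖ ≤ A * (n:ℝ) ^ (d - 1) * ‖μ‖ ^ n := by
        intro n hdn h1n
        have hcomm : Commute N (μ • (1 : Module.End ℂ V)) :=
          ((Commute.one_right N).smul_right μ)
        have hTn : T ^ n = ∑ m ∈ Finset.range (n + 1),
            N ^ m * (μ • (1:Module.End ℂ V)) ^ (n - m) * (n.choose m : Module.End ℂ V) := by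
          have : T = N + μ • 1 := by rw [hN]; abel
          rw [this, hcomm.add_pow]
        have hTnw : (T ^ n) w = ∑ m ∈ Finset.range d,
            (n.choose m : ℂ) • μ ^ (n - m) • (N ^ m) w := by
          rw [hTn, LinearMap.sum_apply]
          rw [← Finset.sum_subset (Finset.range_subset_range.mpr (by omega : d ≤ n + 1))]
          · apply Finset.sum_congr rfl
            intro m _
            simp only [Module.End.mul_apply, smul_pow, one_pow, Module.End.natCast_apply,
              LinearMap.smul_apply, Module.End.one_apply, map_nsmul, map_smul,
              Nat.cast_smul_eq_nsmul]
          · intro m _ hm'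
            have : (N ^ m) w = 0 := hNm m (by simp at hm'; omega)
            simp [smul_pow, Module.End.mul_apply, this]
        rw [hTnw]
        calc ‖∑ m ∈ Finset.range d, (n.choose m : ℂ) • μ ^ (n - m) • (N ^ m) w‖
            ≤ ∑ m ∈ Finset.range d, ‖(n.choose m : ℂ) • μ ^ (n - m) • (N ^ m) w‖ :=
              norm_sum_le _ _
          _ ≤ ∑ m ∈ Finset.range d, ((n:ℝ) ^ (d-1) * ‖μ‖ ^ n) * (‖(N ^ m) w‖ / ‖μ‖ ^ m) := by
              apply Finset.sum_le_sum
              intro m hm'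
              have hmd : m < d := Finset.mem_range.mp hm'
              rw [norm_smul, norm_smul, norm_pow]
              have hch : ‖((n.choose m : ℂ))‖ ≤ (n:ℝ) ^ (d-1) := by
                rw [Complex.norm_natCast]
                calc (n.choose m : ℝ) ≤ (n:ℝ) ^ m := by
                      exact_mod_cast Nat.choose_le_pow n m
                  _ ≤ (n:ℝ) ^ (d-1) :=
                      pow_le_pow_right₀ (by exact_mod_cast h1n) (by omega)
              have hpw : ‖μ‖ ^ (n - m) = ‖μ‖ ^ n / ‖μ‖ ^ m := by
                rw [eq_div_iff (by positivity), ← pow_add]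
                congr 1; omega
              rw [hpw]
              calc ‖(n.choose m : ℂ)‖ * (‖μ‖ ^ n / ‖μ‖ ^ m * ‖(N ^ m) w‖)
                  ≤ (n:ℝ)^(d-1) * (‖μ‖ ^ n / ‖μ‖ ^ m * ‖(N ^ m) w‖) := by
                    apply mul_le_mul_of_nonneg_right hch
                    positivity
                _ = (n:ℝ)^(d-1) * ‖μ‖ ^ n * (‖(N ^ m) w‖ / ‖μ‖ ^ m) := by ring
          _ = A * (n:ℝ) ^ (d - 1) * ‖μ‖ ^ n := by
              rw [← Finset.mul_sum, ← hA]; ring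
      rcases eq_or_lt_of_le hμΛ with heq | hlt
      · -- ‖μ‖ = Λ₀
        have hdm : d ≤ m₀ := hm μ hμ0 hev heq
        refine ⟨A + 1, by linarith, max d 1, fun n hn => ?_⟩
        have hdn : d ≤ n := le_trans (le_max_left _ _) hn
        have h1n : 1 ≤ n := le_trans (le_max_right _ _) hn
        have h1 := key n hdn h1n
        have h2 : (n:ℝ) ^ (d-1) ≤ (n:ℝ) ^ (m₀ - 1) :=
          pow_le_pow_right₀ (by exact_mod_cast h1n) (by omega)
        calc ‖(T ^ n) w‖ ≤ A * (n:ℝ) ^ (d - 1) * ‖μ‖ ^ n := h1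
          _ ≤ A * (n:ℝ) ^ (m₀ - 1) * Λ₀ ^ n := by
              rw [heq]
              apply mul_le_mul_of_nonneg_right _ (pow_nonneg hΛ₀0 n)
              exact mul_le_mul_of_nonneg_left h2 hA0
          _ ≤ (A + 1) * (n:ℝ) ^ (m₀ - 1) * Λ₀ ^ n := by
              have := hRHS0 n
              nlinarith
      · -- ‖μ‖ < Λ₀
        have hΛpos : 0 < Λ₀ := lt_of_le_of_lt hμpos.le hlt
        set r : ℝ := ‖μ‖ / Λ₀ with hr
        have hr0 : 0 ≤ r := div_nonneg hμpos.le hΛ₀0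
        have hr1 : r < 1 := (div_lt_one hΛpos).mpr hlt
        have htend : Filter.Tendsto (fun n : ℕ => A * ((n:ℝ) ^ (d-1) * r ^ n))
            Filter.atTop (nhds 0) := by
          have := tendsto_pow_const_mul_const_pow_of_lt_one (d-1) hr0 hr1
          simpa using this.const_mul A
        have hev' : ∀ᶠ n : ℕ in Filter.atTop, A * ((n:ℝ) ^ (d-1) * r ^ n) ≤ 1 := by
          have := htend.eventually (eventually_le_nhds (by norm_num : (0:ℝ) < 1))
          exact this
        obtain ⟨n₁, hn₁⟩ := Filter.eventually_atTop.mp hev'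
        refine ⟨1, one_pos, max n₁ (max d 1), fun n hn => ?_⟩
        have hdn : d ≤ n := le_trans (le_trans (le_max_left _ _) (le_max_right _ _)) hn
        have h1n : 1 ≤ n := le_trans (le_trans (le_max_right _ _) (le_max_right _ _)) hn
        have hn1' : n₁ ≤ n := le_trans (le_max_left _ _) hn
        have h1 := key n hdn h1n
        have hμr : ‖μ‖ = r * Λ₀ := by rw [hr, div_mul_cancel₀ _ hΛpos.ne']
        have h3 : A * (n:ℝ) ^ (d - 1) * ‖μ‖ ^ n = (A * ((n:ℝ)^(d-1) * r^n)) * Λ₀ ^ n := by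
          rw [hμr, mul_pow]; ring
        calc ‖(T ^ n) w‖ ≤ A * (n:ℝ) ^ (d - 1) * ‖μ‖ ^ n := h1
          _ = (A * ((n:ℝ)^(d-1) * r^n)) * Λ₀ ^ n := h3
          _ ≤ 1 * Λ₀ ^ n := by
              apply mul_le_mul_of_nonneg_right (hn₁ n hn1') (pow_nonneg hΛ₀0 n)
          _ ≤ 1 * (n:ℝ) ^ (m₀ - 1) * Λ₀ ^ n := by
              rw [one_mul, one_mul]
              apply le_mul_of_one_le_left (pow_nonneg hΛ₀0 n)
              exact one_le_pow₀ (by exact_mod_cast h1n)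
  -- assemble
  have hv : v ∈ ⨆ μ : ℂ, T.maxGenEigenspace μ := by
    rw [Module.End.iSup_maxGenEigenspace_eq_top]; trivial
  exact Submodule.iSup_induction (motive := p) _ hv hpmem hp0 hpadd


lemma qw_unit2 (A : Matrix (Fin 2) (Fin 2) ℂ) (hA : A ∈ Matrix.unitaryGroup (Fin 2) ℂ)
    (v : Fin 2 → ℂ) :
    ‖A.mulVec v 0‖ ^ 2 + ‖A.mulVec v 1‖ ^ 2 = ‖v 0‖ ^ 2 + ‖v 1‖ ^ 2 := by
  have h : star A * A = 1 := hA.1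
  have h00 : conj (A 0 0) * A 0 0 + conj (A 1 0) * A 1 0 = 1 := by
    have := congrFun (congrFun h 0) 0
    simpa [Matrix.mul_apply, Fin.sum_univ_two, Matrix.star_apply, Matrix.one_apply] using this
  have h11 : conj (A 0 1) * A 0 1 + conj (A 1 1) * A 1 1 = 1 := by
    have := congrFun (congrFun h 1) 1
    simpa [Matrix.mul_apply, Fin.sum_univ_two, Matrix.star_apply, Matrix.one_apply] using this
  have h01 : conj (A 0 0) * A 0 1 + conj (A 1 0) * A 1 1 = 0 := by
    have := congrFun (congrFun h 0) 1
    simpa [Matrix.mul_apply, Fin.sum_univ_two, Matrix.star_apply, Matrix.one_apply] using this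
  have h10 : conj (A 0 1) * A 0 0 + conj (A 1 1) * A 1 0 = 0 := by
    have := congrFun (congrFun h 1) 0
    simpa [Matrix.mul_apply, Fin.sum_univ_two, Matrix.star_apply, Matrix.one_apply] using this
  have key : A.mulVec v 0 * conj (A.mulVec v 0) + A.mulVec v 1 * conj (A.mulVec v 1)
      = v 0 * conj (v 0) + v 1 * conj (v 1) := by
    simp only [Matrix.mulVec, dotProduct, Fin.sum_univ_two, map_add, map_mul]
    linear_combination (v 0 * conj (v 0)) * h00 + (v 1 * conj (v 1)) * h11
      + (v 1 * conj (v 0)) * h01 + (v 0 * conj (v 1)) * h10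
  have e : ∀ z : ℂ, ‖z‖ ^ 2 = (z * conj z).re := by
    intro z
    rw [Complex.mul_conj]
    simp [Complex.sq_norm]
  rw [e, e, e, e, ← Complex.add_re, ← Complex.add_re, key]


lemma qwalk_apply0 (C : ℤ → Matrix (Fin 2) (Fin 2) ℂ) (ψ : QWState) (x : ℤ) :
    qwalk C ψ x 0 = (C (x + 1)).mulVec (ψ (x + 1)) 0 := rfl

lemma qwalk_apply1 (C : ℤ → Matrix (Fin 2) (Fin 2) ℂ) (ψ : QWState) (x : ℤ) :
    qwalk C ψ x 1 = (C (x - 1)).mulVec (ψ (x - 1)) 1 := rfl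

lemma qw_eig_lt_one (C : ℤ → Matrix (Fin 2) (Fin 2) ℂ)
    (hCu : ∀ x, C x ∈ Matrix.unitaryGroup (Fin 2) ℂ)
    (hC22 : ∀ x, C x 1 1 ≠ 0)
    (a b : ℤ)
    (hJC : ∀ x : ℤ, C x ≠ 1 → a ≤ x ∧ x ≤ b)
    (M : Module.End ℂ (↥(Set.Icc a b) → Fin 2 → ℂ))
    (hM : ∀ f : ↥(Set.Icc a b) → Fin 2 → ℂ, ∀ z : ↥(Set.Icc a b),
      M f z = qwalk C (embed a b f) (z : ℤ))
    (lam : ℂ) (hlam0 : lam ≠ 0) (hev : M.HasEigenvalue lam) : ‖lam‖ < 1 := by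
  obtain ⟨f, hfmem, hf0⟩ := hev.exists_hasEigenvector
  have hMf : M f = lam • f := Module.End.mem_eigenspace_iff.mp hfmem
  set φ : QWState := embed a b f with hφ
  have hφin : ∀ (x : ℤ) (hx : x ∈ Set.Icc a b), φ x = f ⟨x, hx⟩ := by
    intro x hx; simp [hφ, embed, hx]
  have hφout : ∀ x : ℤ, x ∉ Set.Icc a b → φ x = 0 := by
    intro x hx; simp [hφ, embed, hx]
  have hK : ∀ z : ↥(Set.Icc a b), qwalk C φ (z : ℤ) = lam • f z := by
    intro z
    rw [← hM f z, hMf]; rfl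
  -- the sum identity
  set g : ℤ → ℝ := fun x => ‖qwalk C φ x 0‖ ^ 2 + ‖qwalk C φ x 1‖ ^ 2 with hg
  set Sf : ℝ := ∑ x ∈ Finset.Icc a b, (‖φ x 0‖ ^ 2 + ‖φ x 1‖ ^ 2) with hSf
  have sum0 : ∑ x ∈ Finset.Icc (a-1) (b+1), ‖qwalk C φ x 0‖ ^ 2
      = ∑ y ∈ Finset.Icc a b, ‖(C y).mulVec (φ y) 0‖ ^ 2 := by
    have h1 : ∑ x ∈ Finset.Icc (a-1) (b+1), ‖qwalk C φ x 0‖ ^ 2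
        = ∑ y ∈ Finset.Icc (a - 1 + 1) (b + 1 + 1), ‖(C y).mulVec (φ y) 0‖ ^ 2 := by
      rw [← Finset.map_add_right_Icc, Finset.sum_map]
      apply Finset.sum_congr rfl
      intro x _
      rfl
    rw [h1, show a - 1 + 1 = a by ring, show b + 1 + 1 = b + 2 by ring]
    symm
    apply Finset.sum_subset
    · apply Finset.Icc_subset_Icc le_rfl; omega
    · intro y hy hy'
      have : φ y = 0 := by
        apply hφout
        simp only [Set.mem_Icc]
        simp only [Finset.mem_Icc] at hy hy'
        omega
      simp [this, Matrix.mulVec_zero]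
  have sum1 : ∑ x ∈ Finset.Icc (a-1) (b+1), ‖qwalk C φ x 1‖ ^ 2
      = ∑ y ∈ Finset.Icc a b, ‖(C y).mulVec (φ y) 1‖ ^ 2 := by
    have h1 : ∑ x ∈ Finset.Icc (a-1) (b+1), ‖qwalk C φ x 1‖ ^ 2
        = ∑ y ∈ Finset.Icc (a - 1 + -1) (b + 1 + -1), ‖(C y).mulVec (φ y) 1‖ ^ 2 := by
      rw [← Finset.map_add_right_Icc, Finset.sum_map]
      apply Finset.sum_congr rfl
      intro x _
      show ‖(C (x - 1)).mulVec (φ (x - 1)) 1‖ ^ 2 = _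
      rw [show x - 1 = x + -1 by ring]
      rfl
    rw [h1, show a - 1 + -1 = a - 2 by ring, show b + 1 + -1 = b by ring]
    symm
    apply Finset.sum_subset
    · apply Finset.Icc_subset_Icc _ le_rfl; omega
    · intro y hy hy'
      have : φ y = 0 := by
        apply hφout
        simp only [Set.mem_Icc]
        simp only [Finset.mem_Icc] at hy hy'
        omega
      simp [this, Matrix.mulVec_zero]
  have total_eq : ∑ x ∈ Finset.Icc (a-1) (b+1), g x = Sf := by
    rw [hg, hSf]
    rw [Finset.sum_add_distrib, sum0, sum1, ← Finset.sum_add_distrib]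
    apply Finset.sum_congr rfl
    intro y _
    exact qw_unit2 (C y) (hCu y) (φ y)
  -- positivity of Sf
  obtain ⟨z, hz⟩ : ∃ z, f z ≠ 0 := by
    by_contra hcon
    push_neg at hcon
    exact hf0 (funext fun z => hcon z)
  obtain ⟨i, hi⟩ : ∃ i, f z i ≠ 0 := by
    by_contra hcon
    push_neg at hcon
    exact hz (funext fun i => hcon i)
  have hzmem : (z : ℤ) ∈ Finset.Icc a b := by
    rw [Finset.mem_Icc]; exact Set.mem_Icc.mp z.2
  have hfz2 : ∀ (v : Fin 2 → ℂ), v ≠ 0 → 0 < ‖v 0‖ ^ 2 + ‖v 1‖ ^ 2 := by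
    intro v hv
    by_contra hcon
    push_neg at hcon
    have e0 : ‖v 0‖ ^ 2 = 0 := le_antisymm (by nlinarith [sq_nonneg ‖v 1‖]) (sq_nonneg _)
    have e1 : ‖v 1‖ ^ 2 = 0 := le_antisymm (by nlinarith [sq_nonneg ‖v 0‖]) (sq_nonneg _)
    apply hv
    funext j
    have j0 : v 0 = 0 := norm_eq_zero.mp (by nlinarith [norm_nonneg (v 0)])
    have j1 : v 1 = 0 := norm_eq_zero.mp (by nlinarith [norm_nonneg (v 1)])
    fin_cases j
    · exact j0
    · exact j1
  have hSfpos : 0 < Sf := by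
    rw [hSf]
    apply Finset.sum_pos' (fun x _ => by positivity)
    refine ⟨(z : ℤ), hzmem, ?_⟩
    have hφz : φ (z : ℤ) = f z := by
      rw [hφin _ z.2]
    rw [hφz]
    exact hfz2 _ hz
  have hab : a ≤ b := by
    have := Finset.mem_Icc.mp hzmem
    omega
  -- inner sum in terms of ‖lam‖
  have inner_eq : ∑ x ∈ Finset.Icc a b, g x = ‖lam‖ ^ 2 * Sf := by
    rw [hg, hSf, Finset.mul_sum]
    apply Finset.sum_congr rfl
    intro x hx
    have hxm : x ∈ Set.Icc a b := Set.mem_Icc.mpr (Finset.mem_Icc.mp hx)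
    have h1 : qwalk C φ x = lam • f ⟨x, hxm⟩ := hK ⟨x, hxm⟩
    have h2 : φ x = f ⟨x, hxm⟩ := hφin x hxm
    show ‖qwalk C φ x 0‖ ^ 2 + ‖qwalk C φ x 1‖ ^ 2 = _
    rw [h1, h2]
    simp only [Pi.smul_apply, smul_eq_mul, norm_mul, mul_pow]
    ring
  have hle : ∑ x ∈ Finset.Icc a b, g x ≤ ∑ x ∈ Finset.Icc (a-1) (b+1), g x :=
    Finset.sum_le_sum_of_subset_of_nonneg
      (Finset.Icc_subset_Icc (by omega) (by omega))
      (fun i _ _ => by rw [hg]; positivity)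
  have hlam_le : ‖lam‖ ≤ 1 := by
    rw [inner_eq] at hle
    rw [total_eq] at hle
    by_contra hc
    push_neg at hc
    have h2 : 1 < ‖lam‖ ^ 2 := by nlinarith
    have h3 := mul_lt_mul_of_pos_right h2 hSfpos
    rw [one_mul] at h3
    linarith
  by_contra hcon
  push_neg at hcon
  have hlam1 : ‖lam‖ = 1 := le_antisymm hlam_le hcon
  -- boundary terms vanish
  have hsdiff : ∑ x ∈ Finset.Icc (a-1) (b+1) \ Finset.Icc a b, g x = 0 := by
    have hsub : Finset.Icc a b ⊆ Finset.Icc (a-1) (b+1) :=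
      Finset.Icc_subset_Icc (by omega) (by omega)
    have hsd := Finset.sum_sdiff (f := g) hsub
    have hin : ∑ x ∈ Finset.Icc a b, g x = Sf := by rw [inner_eq, hlam1]; ring
    rw [hin, total_eq] at hsd
    linarith
  have hbdry : ∀ x ∈ Finset.Icc (a-1) (b+1) \ Finset.Icc a b, g x = 0 :=
    (Finset.sum_eq_zero_iff_of_nonneg (fun x _ => by rw [hg]; positivity)).mp hsdiff
  have hqb1 : qwalk C φ (b+1) 1 = 0 := by
    have hmem : b + 1 ∈ Finset.Icc (a-1) (b+1) \ Finset.Icc a b := by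
      rw [Finset.mem_sdiff, Finset.mem_Icc, Finset.mem_Icc]
      omega
    have h0 : ‖qwalk C φ (b+1) 0‖ ^ 2 + ‖qwalk C φ (b+1) 1‖ ^ 2 = 0 := hbdry _ hmem
    have h1 : ‖qwalk C φ (b+1) 1‖ ^ 2 = 0 :=
      le_antisymm (by nlinarith [sq_nonneg ‖qwalk C φ (b+1) 0‖]) (sq_nonneg _)
    exact norm_eq_zero.mp (by nlinarith [norm_nonneg (qwalk C φ (b+1) 1)])
  -- maximal support point
  set F := (Finset.Icc a b).filter (fun x => φ x ≠ 0) with hF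
  have hFne : F.Nonempty := by
    refine ⟨(z : ℤ), Finset.mem_filter.mpr ⟨hzmem, ?_⟩⟩
    rw [hφin _ z.2]
    exact hz
  set t := F.max' hFne with ht
  have htmem := F.max'_mem hFne
  obtain ⟨htIcc, htne⟩ := Finset.mem_filter.mp htmem
  have htmax : ∀ x : ℤ, t < x → φ x = 0 := by
    intro x hx
    by_cases hxI : x ∈ Set.Icc a b
    · by_contra hne
      have hxF : x ∈ F := Finset.mem_filter.mpr
        ⟨Finset.mem_Icc.mpr (Set.mem_Icc.mp hxI), hne⟩
      have := F.le_max' x hxF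
      omega
    · exact hφout x hxI
  have hta : a ≤ t := (Finset.mem_Icc.mp htIcc).1
  have htb : t ≤ b := (Finset.mem_Icc.mp htIcc).2
  have htmemS : t ∈ Set.Icc a b := Set.mem_Icc.mpr ⟨hta, htb⟩
  have hq_t : qwalk C φ t = lam • f ⟨t, htmemS⟩ := hK ⟨t, htmemS⟩
  have hφt : φ t = f ⟨t, htmemS⟩ := hφin t htmemS
  have hφt0 : φ t 0 = 0 := by
    have h2 : φ (t+1) = 0 := htmax _ (by omega)
    have h3 : qwalk C φ t 0 = 0 := by
      rw [qwalk_apply0, h2, Matrix.mulVec_zero]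
      rfl
    rw [hq_t] at h3
    have : lam * f ⟨t, htmemS⟩ 0 = 0 := by simpa using h3
    rcases mul_eq_zero.mp this with h | h
    · exact absurd h hlam0
    · rw [hφt]; exact h
  have e2 : qwalk C φ (t+1) 1 = 0 := by
    by_cases hcase : t + 1 ≤ b
    · have hmem : t + 1 ∈ Set.Icc a b := Set.mem_Icc.mpr ⟨by omega, hcase⟩
      have h1 := hK ⟨t+1, hmem⟩
      have h2 : f ⟨t+1, hmem⟩ = 0 := by
        rw [← hφin _ hmem]
        exact htmax _ (by omega)
      rw [h2, smul_zero] at h1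
      rw [show ((⟨t+1, hmem⟩ : ↥(Set.Icc a b)) : ℤ) = t + 1 from rfl] at h1
      rw [h1]
      rfl
    · have htb' : t = b := by omega
      rw [htb']
      exact hqb1
  have e3 : qwalk C φ (t+1) 1 = C t 1 0 * φ t 0 + C t 1 1 * φ t 1 := by
    rw [qwalk_apply1, show t + 1 - 1 = t by ring]
    simp [Matrix.mulVec, dotProduct, Fin.sum_univ_two]
  have hφt1 : φ t 1 = 0 := by
    rw [e3, hφt0, mul_zero, zero_add] at e2
    rcases mul_eq_zero.mp e2 with h | h
    · exact absurd h (hC22 t)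
    · exact h
  apply htne
  funext j
  fin_cases j
  · exact hφt0
  · exact hφt1


lemma qw_iter_formula (C : ℤ → Matrix (Fin 2) (Fin 2) ℂ) (ψ : QWState) (a b : ℤ)
    (hJψ : ∀ x : ℤ, ψ x ≠ 0 → a ≤ x ∧ x ≤ b)
    (hJC : ∀ x : ℤ, C x ≠ 1 → a ≤ x ∧ x ≤ b)
    (M : Module.End ℂ (↥(Set.Icc a b) → Fin 2 → ℂ))
    (hM : ∀ f : ↥(Set.Icc a b) → Fin 2 → ℂ, ∀ z : ↥(Set.Icc a b),
      M f z = qwalk C (embed a b f) (z : ℤ))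
    (n : ℕ) :
    (∀ z : ↥(Set.Icc a b), (qwalk C)^[n] ψ (z : ℤ)
        = (M ^ n) (fun w : ↥(Set.Icc a b) => ψ (w : ℤ)) z) ∧
    (∀ x : ℤ, b < x → (qwalk C)^[n] ψ x 0 = 0) ∧
    (∀ x : ℤ, x < a → (qwalk C)^[n] ψ x 1 = 0) := by
  set ψt : ↥(Set.Icc a b) → Fin 2 → ℂ := fun w => ψ (w : ℤ) with hψt
  induction n with
  | zero =>
    refine ⟨fun z => by simp [hψt], ?_, ?_⟩
    · intro x hx
      by_cases h : ψ x = 0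
      · rw [Function.iterate_zero_apply, h]; rfl
      · exact absurd (hJψ x h).2 (by omega)
    · intro x hx
      by_cases h : ψ x = 0
      · rw [Function.iterate_zero_apply, h]; rfl
      · exact absurd (hJψ x h).1 (by omega)
  | succ n ih =>
    obtain ⟨ih1, ih2, ih3⟩ := ih
    set φn : QWState := (qwalk C)^[n] ψ with hφn
    set gn : ↥(Set.Icc a b) → Fin 2 → ℂ := (M ^ n) ψt with hgn
    have hstep : (qwalk C)^[n+1] ψ = qwalk C φn := Function.iterate_succ_apply' (qwalk C) n ψ
    have hMg : ∀ z : ↥(Set.Icc a b), (M ^ (n+1)) ψt z = qwalk C (embed a b gn) (z : ℤ) := by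
      intro z
      have h1 : (M ^ (n+1)) ψt = M gn := by
        rw [pow_succ', Module.End.mul_apply]
      rw [h1, hM gn z]
    refine ⟨?_, ?_, ?_⟩
    · intro z
      rw [hstep, hMg z]
      have hza : a ≤ (z : ℤ) := z.2.1
      have hzb : (z : ℤ) ≤ b := z.2.2
      funext i
      fin_cases i
      · show (C ((z:ℤ) + 1)).mulVec (φn ((z:ℤ) + 1)) 0
            = (C ((z:ℤ) + 1)).mulVec (embed a b gn ((z:ℤ) + 1)) 0
        by_cases hc : (z : ℤ) + 1 ≤ b
        · have hmem : (z : ℤ) + 1 ∈ Set.Icc a b := Set.mem_Icc.mpr ⟨by omega, hc⟩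
          have he : embed a b gn ((z:ℤ) + 1) = gn ⟨(z:ℤ)+1, hmem⟩ := by
            simp [embed, hmem]
          rw [he, ← ih1 ⟨(z:ℤ)+1, hmem⟩]
        · have hC1 : C ((z:ℤ) + 1) = 1 := by
            by_contra h
            exact absurd (hJC _ h).2 (by omega)
          have he : embed a b gn ((z:ℤ) + 1) = 0 := by
            have : (z:ℤ) + 1 ∉ Set.Icc a b := by
              rw [Set.mem_Icc]; omega
            simp [embed, this]
          rw [he, Matrix.mulVec_zero, hC1, Matrix.one_mulVec]
          exact ih2 _ (by omega)
      · show (C ((z:ℤ) - 1)).mulVec (φn ((z:ℤ) - 1)) 1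
            = (C ((z:ℤ) - 1)).mulVec (embed a b gn ((z:ℤ) - 1)) 1
        by_cases hc : a ≤ (z : ℤ) - 1
        · have hmem : (z : ℤ) - 1 ∈ Set.Icc a b := Set.mem_Icc.mpr ⟨hc, by omega⟩
          have he : embed a b gn ((z:ℤ) - 1) = gn ⟨(z:ℤ)-1, hmem⟩ := by
            simp [embed, hmem]
          rw [he, ← ih1 ⟨(z:ℤ)-1, hmem⟩]
        · have hC1 : C ((z:ℤ) - 1) = 1 := by
            by_contra h
            exact absurd (hJC _ h).1 (by omega)
          have he : embed a b gn ((z:ℤ) - 1) = 0 := by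
            have : (z:ℤ) - 1 ∉ Set.Icc a b := by
              rw [Set.mem_Icc]; omega
            simp [embed, this]
          rw [he, Matrix.mulVec_zero, hC1, Matrix.one_mulVec]
          exact ih3 _ (by omega)
    · intro x hx
      rw [hstep, qwalk_apply0]
      have hC1 : C (x + 1) = 1 := by
        by_contra h
        exact absurd (hJC _ h).2 (by omega)
      rw [hC1, Matrix.one_mulVec]
      exact ih2 _ (by omega)
    · intro x hx
      rw [hstep, qwalk_apply1]
      have hC1 : C (x - 1) = 1 := by
        by_contra h
        exact absurd (hJC _ h).1 (by omega)
      rw [hC1, Matrix.one_mulVec]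
      exact ih3 _ (by omega)

end AuxQW

/-- Decay of the survival probability: with M_J = 1_J U 1_J on states supported in
J = [a,b] ⊇ supp ψ ∪ chs(C−I₂), Λ₀ the largest modulus of a nonzero eigenvalue of M_J
(Λ₀ = 0 if none) and m₀ the largest algebraic multiplicity among nonzero eigenvalues of
modulus Λ₀ (m₀ = 1 if Λ₀ = 0), one has Λ₀ < 1 and
‖1_J U^n ψ‖ ≤ M n^{m₀−1} Λ₀^n for large n. -/


theorem survival_probability_decay
    (C : ℤ → Matrix (Fin 2) (Fin 2) ℂ) (hC : CoinAssumption C)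
    (ψ : QWState) (hψfin : Set.Finite {x : ℤ | ψ x ≠ 0})
    (a b : ℤ)
    (hJψ : ∀ x : ℤ, ψ x ≠ 0 → a ≤ x ∧ x ≤ b)
    (hJC : ∀ x : ℤ, C x ≠ 1 → a ≤ x ∧ x ≤ b)
    (M : Module.End ℂ (↥(Set.Icc a b) → Fin 2 → ℂ))
    (hM : ∀ f : ↥(Set.Icc a b) → Fin 2 → ℂ, ∀ z : ↥(Set.Icc a b),
      M f z = qwalk C (embed a b f) (z : ℤ))
    (Λ₀ : ℝ) (m₀ : ℕ)
    (hΛ₀ub : ∀ lam : ℂ, lam ≠ 0 → M.HasEigenvalue lam → ‖lam‖ ≤ Λ₀)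
    (hΛ₀mem : (∃ lam : ℂ, lam ≠ 0 ∧ M.HasEigenvalue lam ∧ ‖lam‖ = Λ₀) ∨
      ((¬ ∃ lam : ℂ, lam ≠ 0 ∧ M.HasEigenvalue lam) ∧ Λ₀ = 0))
    (hm₀ub : ∀ lam : ℂ, lam ≠ 0 → M.HasEigenvalue lam → ‖lam‖ = Λ₀ →
      Module.finrank ℂ ↥(M.maxGenEigenspace lam) ≤ m₀)
    (hm₀mem : (∃ lam : ℂ, lam ≠ 0 ∧ M.HasEigenvalue lam ∧ ‖lam‖ = Λ₀ ∧
        Module.finrank ℂ ↥(M.maxGenEigenspace lam) = m₀) ∨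
      ((¬ ∃ lam : ℂ, lam ≠ 0 ∧ M.HasEigenvalue lam) ∧ m₀ = 1)) :
    Λ₀ < 1 ∧
      ∃ Mc : ℝ, 0 < Mc ∧ ∃ n₀ : ℕ, ∀ n : ℕ, n₀ ≤ n →
        Real.sqrt (∑ x ∈ Finset.Icc a b,
            (‖(qwalk C)^[n] ψ x 0‖ ^ 2 + ‖(qwalk C)^[n] ψ x 1‖ ^ 2))
          ≤ Mc * (n : ℝ) ^ (m₀ - 1) * Λ₀ ^ n := by
  -- nonnegativity of Λ₀
  have hΛ₀0 : 0 ≤ Λ₀ := by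
    rcases hΛ₀mem with ⟨lam, _, _, heq⟩ | ⟨_, heq⟩
    · rw [← heq]; exact norm_nonneg lam
    · rw [heq]
  have hlt : ∀ lam : ℂ, lam ≠ 0 → M.HasEigenvalue lam → ‖lam‖ < 1 :=
    fun lam h0 hev => qw_eig_lt_one C hC.unitary hC.d22 a b hJC M hM lam h0 hev
  have hΛ₀1 : Λ₀ < 1 := by
    rcases hΛ₀mem with ⟨lam, h0, hev, heq⟩ | ⟨_, heq⟩
    · rw [← heq]; exact hlt lam h0 hev
    · rw [heq]; norm_num
  refine ⟨hΛ₀1, ?_⟩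
  set ψt : ↥(Set.Icc a b) → Fin 2 → ℂ := fun w => ψ (w : ℤ) with hψt
  obtain ⟨Mc, hMc, n₀, hbd⟩ := qw_growth_bound M Λ₀ m₀ hΛ₀0 hΛ₀ub hm₀ub ψt
  set c : ℝ := Real.sqrt (2 * (Finset.Icc a b).card) with hc
  have hc0 : 0 ≤ c := Real.sqrt_nonneg _
  refine ⟨c * Mc + 1, by positivity, n₀, fun n hn => ?_⟩
  have hiter := qw_iter_formula C ψ a b hJψ hJC M hM n
  have hbound := hbd n hn
  have hRHS0 : (0:ℝ) ≤ (n : ℝ) ^ (m₀ - 1) * Λ₀ ^ n :=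
    mul_nonneg (pow_nonneg (Nat.cast_nonneg n) _) (pow_nonneg hΛ₀0 n)
  -- pointwise bound
  have hsum : ∑ x ∈ Finset.Icc a b,
      (‖(qwalk C)^[n] ψ x 0‖ ^ 2 + ‖(qwalk C)^[n] ψ x 1‖ ^ 2)
      ≤ (2 * (Finset.Icc a b).card) * ‖(M ^ n) ψt‖ ^ 2 := by
    have hterm : ∀ x ∈ Finset.Icc a b,
        ‖(qwalk C)^[n] ψ x 0‖ ^ 2 + ‖(qwalk C)^[n] ψ x 1‖ ^ 2
          ≤ 2 * ‖(M ^ n) ψt‖ ^ 2 := by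
      intro x hx
      have hxm : x ∈ Set.Icc a b := Set.mem_Icc.mpr (Finset.mem_Icc.mp hx)
      have hval : (qwalk C)^[n] ψ x = (M ^ n) ψt ⟨x, hxm⟩ := hiter.1 ⟨x, hxm⟩
      have hb1 : ∀ i : Fin 2, ‖(M ^ n) ψt ⟨x, hxm⟩ i‖ ≤ ‖(M ^ n) ψt‖ :=
        fun i => le_trans (norm_le_pi_norm ((M ^ n) ψt ⟨x, hxm⟩) i)
          (norm_le_pi_norm ((M ^ n) ψt) ⟨x, hxm⟩)
      rw [hval]
      have h0 := hb1 0
      have h1 := hb1 1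
      have hn0 : (0:ℝ) ≤ ‖(M ^ n) ψt ⟨x, hxm⟩ 0‖ := norm_nonneg _
      have hn1 : (0:ℝ) ≤ ‖(M ^ n) ψt ⟨x, hxm⟩ 1‖ := norm_nonneg _
      nlinarith
    calc ∑ x ∈ Finset.Icc a b,
        (‖(qwalk C)^[n] ψ x 0‖ ^ 2 + ‖(qwalk C)^[n] ψ x 1‖ ^ 2)
        ≤ ∑ _x ∈ Finset.Icc a b, 2 * ‖(M ^ n) ψt‖ ^ 2 := Finset.sum_le_sum hterm
      _ = (Finset.Icc a b).card * (2 * ‖(M ^ n) ψt‖ ^ 2) := by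
          rw [Finset.sum_const, nsmul_eq_mul]
      _ = (2 * (Finset.Icc a b).card) * ‖(M ^ n) ψt‖ ^ 2 := by ring
  calc Real.sqrt (∑ x ∈ Finset.Icc a b,
        (‖(qwalk C)^[n] ψ x 0‖ ^ 2 + ‖(qwalk C)^[n] ψ x 1‖ ^ 2))
      ≤ Real.sqrt ((2 * (Finset.Icc a b).card) * ‖(M ^ n) ψt‖ ^ 2) :=
        Real.sqrt_le_sqrt hsum
    _ = c * ‖(M ^ n) ψt‖ := by
        rw [hc, Real.sqrt_mul (by positivity), Real.sqrt_sq (norm_nonneg _)]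
    _ ≤ c * (Mc * (n : ℝ) ^ (m₀ - 1) * Λ₀ ^ n) := by
        apply mul_le_mul_of_nonneg_left hbound hc0
    _ = (c * Mc) * (n : ℝ) ^ (m₀ - 1) * Λ₀ ^ n := by ring
    _ ≤ (c * Mc + 1) * (n : ℝ) ^ (m₀ - 1) * Λ₀ ^ n := by nlinarith
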